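/- There exist constants C > 0 and ε₀ ∈ (0,1) such that for all ε ∈ (0, ε₀), all h, A > 0 and all l₁, l₂ > h with |l₁ − l₂| < A and A/h ≤ ε, the following holds. Let R₁ = [0,l₁] × [0,h] and R₂ = [0,l₂] × [0,h] be euclidean rectangles in ℝ², and let φ_b, φ_t : [0,l₁] → [0,l₂] be increasing C¹ bijections, each of which is an (ε,A)-almost-isometry. Define f : ∂R₁ → ∂R₂ by f(x,0) = (φ_b(x),0), f(x,h) = (φ_t(x),h), f(0,y) = (0,y), and f(l₁,y) = (l₂,y). Then f extends to a homeomorphism F : R₁ → R₂ which is (1+Cε)-quasiconformal in the Lipschitz sense on the interior of R₁. -/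

import Mathlib

open Complex MeasureTheory Metric Set

/-- `f` is `K`-quasiconformal in the Lipschitz sense on the set `S ⊆ ℂ`:
`f` is injective and continuous on `S`, locally Lipschitz on the interior of `S`,
and at Lebesgue-almost every point of the interior of `S` it is differentiable with
(real) derivative `A` satisfying `‖A‖² ≤ K · det A`. -/
def IsQCLip (K : ℝ) (S : Set ℂ) (f : ℂ → ℂ) : Prop :=
  Set.InjOn f S ∧ ContinuousOn f S ∧
  (∀ z ∈ interior S, ∃ L : NNReal, ∃ δ > (0:ℝ),
    LipschitzOnWith L f (Metric.ball z δ ∩ interior S)) ∧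
  (∀ᵐ z ∂(MeasureTheory.volume.restrict (interior S)), ∃ A : ℂ →L[ℝ] ℂ,
    HasFDerivAt f A z ∧ ‖A‖ ^ 2 ≤ K * LinearMap.det (A : ℂ →ₗ[ℝ] ℂ))

/-- `φ` is an increasing C¹ bijection from `[0,l₁]` onto `[0,l₂]` which is an
`(ε,A)`-almost-isometry: `|φ′ − 1| ≤ ε` pointwise and
`|(φ(x₂) − φ(x₁)) − (x₂ − x₁)| ≤ A` for all `x₁ ≤ x₂` in `[0,l₁]`. -/
def AlmostIsom (ε A l₁ l₂ : ℝ) (φ : ℝ → ℝ) : Prop :=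
  φ 0 = 0 ∧ φ l₁ = l₂ ∧ StrictMonoOn φ (Set.Icc 0 l₁) ∧
  ContDiffOn ℝ 1 φ (Set.Icc 0 l₁) ∧
  (∀ x ∈ Set.Icc 0 l₁, |derivWithin φ (Set.Icc 0 l₁) x - 1| ≤ ε) ∧
  (∀ x₁ ∈ Set.Icc 0 l₁, ∀ x₂ ∈ Set.Icc 0 l₁, x₁ ≤ x₂ →
    |(φ x₂ - φ x₁) - (x₂ - x₁)| ≤ A)

/-- The closed euclidean rectangle `[0,l] × [0,h]` in `ℂ`. -/
def Rect (l h : ℝ) : Set ℂ :=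
  {z : ℂ | z.re ∈ Set.Icc 0 l ∧ z.im ∈ Set.Icc 0 h}

theorem almostIsom_near {ε A l₁ l₂ : ℝ} {φ : ℝ → ℝ} (hφ : AlmostIsom ε A l₁ l₂ φ)
    (hl : 0 ≤ l₁) {x : ℝ} (hx : x ∈ Set.Icc 0 l₁) : |φ x - x| ≤ A := by
  obtain ⟨h0, -, -, -, -, hAI⟩ := hφ
  simpa [h0] using hAI 0 ⟨le_refl 0, hl⟩ x hx hx.1

theorem almostIsom_mem {ε A l₁ l₂ : ℝ} {φ : ℝ → ℝ} (hφ : AlmostIsom ε A l₁ l₂ φ)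
    (hl : 0 ≤ l₁) {x : ℝ} (hx : x ∈ Set.Icc 0 l₁) : φ x ∈ Set.Icc 0 l₂ := by
  obtain ⟨h0, hl2, hmono, -, -, -⟩ := hφ
  have hI : (0:ℝ) ∈ Set.Icc 0 l₁ := ⟨le_refl 0, hl⟩
  have hL : l₁ ∈ Set.Icc 0 l₁ := ⟨hl, le_refl l₁⟩
  constructor
  · rcases eq_or_lt_of_le hx.1 with h | h
    · simp [← h, h0]
    · have := hmono hI hx h
      rw [h0] at this; exact this.le
  · rcases eq_or_lt_of_le hx.2 with h | h
    · rw [h, hl2]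
    · have := hmono hx hL h
      rw [hl2] at this; exact this.le

theorem almostIsom_lip {ε A l₁ l₂ : ℝ} {φ : ℝ → ℝ} (hφ : AlmostIsom ε A l₁ l₂ φ)
    {x y : ℝ} (hx : x ∈ Set.Icc 0 l₁) (hy : y ∈ Set.Icc 0 l₁) :
    |φ y - φ x| ≤ (1 + ε) * |y - x| := by
  obtain ⟨-, -, -, hC1, hder, -⟩ := hφ
  have hdiff : DifferentiableOn ℝ φ (Set.Icc 0 l₁) := hC1.differentiableOn one_ne_zero
  have key := Convex.norm_image_sub_le_of_norm_derivWithin_le hdiff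
    (C := 1 + ε) (fun t ht => by
      have h1 := hder t ht
      rw [Real.norm_eq_abs]
      have h2 : derivWithin φ (Set.Icc 0 l₁) t
          = (derivWithin φ (Set.Icc 0 l₁) t - 1) + 1 := by ring
      rw [h2]
      calc |(derivWithin φ (Set.Icc 0 l₁) t - 1) + 1|
          ≤ |derivWithin φ (Set.Icc 0 l₁) t - 1| + |(1:ℝ)| := abs_add_le _ _
        _ ≤ 1 + ε := by rw [abs_one]; linarith)
    (convex_Icc 0 l₁) hx hy
  simpa [Real.norm_eq_abs] using key

theorem almostIsom_hasDerivAt {ε A l₁ l₂ : ℝ} {φ : ℝ → ℝ} (hφ : AlmostIsom ε A l₁ l₂ φ)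
    {x : ℝ} (hx : x ∈ Set.Ioo 0 l₁) :
    HasDerivAt φ (derivWithin φ (Set.Icc 0 l₁) x) x := by
  obtain ⟨-, -, -, hC1, -, -⟩ := hφ
  have hdiff : DifferentiableOn ℝ φ (Set.Icc 0 l₁) := hC1.differentiableOn one_ne_zero
  have hmem : Set.Icc 0 l₁ ∈ nhds x := Icc_mem_nhds hx.1 hx.2
  exact ((hdiff x (Set.mem_Icc_of_Ioo hx)).hasDerivWithinAt).hasDerivAt hmem

theorem interior_Rect (l h : ℝ) :
    interior (Rect l h) = {z : ℂ | z.re ∈ Set.Ioo 0 l ∧ z.im ∈ Set.Ioo 0 h} := by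
  have : Rect l h = (Set.Icc 0 l) ×ℂ (Set.Icc 0 h) := by
    ext z; simp [Rect, Complex.mem_reProdIm]
  rw [this, Complex.interior_reProdIm, interior_Icc, interior_Icc]
  ext z; simp [Complex.mem_reProdIm]

set_option maxHeartbeats 2000000 in
/-- Quasiconformal extension lemma: there are constants `C > 0`, `ε₀ ∈ (0,1)` such that
for `ε ∈ (0,ε₀)`, rectangles `R₁ = [0,l₁]×[0,h]`, `R₂ = [0,l₂]×[0,h]` with
`l₁,l₂ > h`, `|l₁ − l₂| < A`, `A/h ≤ ε`, any boundary map which is an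
`(ε,A)`-almost-isometry `φ_b`, `φ_t` on the horizontal sides and an isometry on the
vertical sides extends to a homeomorphism `F : R₁ → R₂` which is
`(1+Cε)`-quasiconformal in the Lipschitz sense on the interior of `R₁`. -/
theorem qc_extension_rectangles :
    ∃ C > (0:ℝ), ∃ ε₀ ∈ Set.Ioo (0:ℝ) 1, ∀ ε ∈ Set.Ioo (0:ℝ) ε₀,
    ∀ h A l₁ l₂ : ℝ, 0 < h → 0 < A → h < l₁ → h < l₂ → |l₁ - l₂| < A → A / h ≤ ε →
    ∀ φb φt : ℝ → ℝ, AlmostIsom ε A l₁ l₂ φb → AlmostIsom ε A l₁ l₂ φt →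
    ∃ F : ℂ → ℂ,
      Set.BijOn F (Rect l₁ h) (Rect l₂ h) ∧
      ContinuousOn F (Rect l₁ h) ∧
      (∀ x ∈ Set.Icc (0:ℝ) l₁,
        F (x : ℂ) = ((φb x : ℝ) : ℂ) ∧
        F ((x : ℂ) + (h : ℂ) * Complex.I) = ((φt x : ℝ) : ℂ) + (h : ℂ) * Complex.I) ∧
      (∀ y ∈ Set.Icc (0:ℝ) h,
        F ((y : ℂ) * Complex.I) = (y : ℂ) * Complex.I ∧
        F ((l₁ : ℂ) + (y : ℂ) * Complex.I) = (l₂ : ℂ) + (y : ℂ) * Complex.I) ∧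
      IsQCLip (1 + C * ε) (Rect l₁ h) F := by
  refine ⟨34, by norm_num, 1/2, ⟨by norm_num, by norm_num⟩, ?_⟩
  rintro ε ⟨hε0, hεhalf⟩ h A l₁ l₂ hh hA hl₁ hl₂ hll hAh φb φt hφb hφt
  have hε1 : ε < 1 := lt_trans hεhalf (by norm_num)
  have hl₁0 : 0 < l₁ := lt_trans hh hl₁
  have hl₁0' : (0:ℝ) ≤ l₁ := hl₁0.le
  have hhne : h ≠ 0 := ne_of_gt hh
  have hAε : A ≤ ε * h := by rw [div_le_iff₀ hh] at hAh; linarith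
  obtain ⟨hb0, hbl, hbmono, hbC1, hbder, -⟩ := id hφb
  obtain ⟨ht0f, htl, htmono, htC1, htder, -⟩ := id hφt
  set F : ℂ → ℂ := fun z =>
    (((1 - z.im / h) * φb z.re + (z.im / h) * φt z.re : ℝ) : ℂ) + z.im • Complex.I with hFdef
  have Fre : ∀ z : ℂ, (F z).re = (1 - z.im / h) * φb z.re + (z.im / h) * φt z.re := by
    intro z; simp [hFdef, Complex.real_smul]
  have Fim : ∀ z : ℂ, (F z).im = z.im := by
    intro z; simp [hFdef, Complex.real_smul]
  -- maps to
  have hmaps : Set.MapsTo F (Rect l₁ h) (Rect l₂ h) := by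
    intro z hz
    obtain ⟨hzre, hzim⟩ := hz
    have ht0 : 0 ≤ z.im / h := div_nonneg hzim.1 hh.le
    have ht1 : z.im / h ≤ 1 := (div_le_one hh).mpr hzim.2
    have hbm := almostIsom_mem hφb hl₁0' hzre
    have htm := almostIsom_mem hφt hl₁0' hzre
    refine ⟨?_, ?_⟩
    · rw [Fre]
      constructor
      · have k1 := mul_nonneg (by linarith : (0:ℝ) ≤ 1 - z.im / h) hbm.1
        have k2 := mul_nonneg ht0 htm.1
        linarith
      · have k1 := mul_le_mul_of_nonneg_left hbm.2 (by linarith : (0:ℝ) ≤ 1 - z.im / h)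
        have k2 := mul_le_mul_of_nonneg_left htm.2 ht0
        linarith
    · rw [Fim]; exact hzim
  -- injectivity
  have hinj : Set.InjOn F (Rect l₁ h) := by
    intro z hz w hw hFzw
    obtain ⟨hzre, hzim⟩ := hz
    obtain ⟨hwre, hwim⟩ := hw
    have him : z.im = w.im := by rw [← Fim z, ← Fim w, hFzw]
    have ht0 : 0 ≤ z.im / h := div_nonneg hzim.1 hh.le
    have ht1 : z.im / h ≤ 1 := (div_le_one hh).mpr hzim.2
    have hre : (1 - z.im / h) * φb z.re + (z.im / h) * φt z.re
        = (1 - z.im / h) * φb w.re + (z.im / h) * φt w.re := by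
      have hc := congrArg Complex.re hFzw
      rw [Fre, Fre, ← him] at hc
      exact hc
    have hg : StrictMonoOn
        (fun x => (1 - z.im / h) * φb x + (z.im / h) * φt x) (Set.Icc 0 l₁) := by
      intro p hp q hq hpq
      have h1 := hbmono hp hq hpq
      have h2 := htmono hp hq hpq
      dsimp only
      rcases eq_or_lt_of_le ht0 with he | he
      · rw [← he]; simpa using h1
      · have k1 := mul_pos he (sub_pos.mpr h2)
        have k2 := mul_nonneg (sub_nonneg.mpr ht1) (sub_pos.mpr h1).le
        nlinarith [k1, k2]
    have : z.re = w.re := hg.injOn hzre hwre hre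
    exact Complex.ext this him
  -- surjectivity
  have hsurj : Set.SurjOn F (Rect l₁ h) (Rect l₂ h) := by
    intro w hw
    obtain ⟨hwre, hwim⟩ := hw
    set t : ℝ := w.im / h with htdef
    have hgc : ContinuousOn (fun x => (1 - t) * φb x + t * φt x) (Set.Icc 0 l₁) :=
      (continuousOn_const.mul (hbC1.continuousOn)).add
        (continuousOn_const.mul (htC1.continuousOn))
    have hg0 : (fun x => (1 - t) * φb x + t * φt x) 0 = 0 := by simp [hb0, ht0f]
    have hgl : (fun x => (1 - t) * φb x + t * φt x) l₁ = l₂ := by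
      simp only [hbl, htl]; ring
    have hwmem : w.re ∈ Set.Icc ((fun x => (1 - t) * φb x + t * φt x) 0)
        ((fun x => (1 - t) * φb x + t * φt x) l₁) := by
      rw [hg0, hgl]; exact hwre
    obtain ⟨x, hx, hgx⟩ := intermediate_value_Icc hl₁0' hgc hwmem
    refine ⟨(x : ℂ) + w.im • Complex.I, ?_, ?_⟩
    · refine ⟨?_, ?_⟩ <;> simp [Complex.real_smul]
      · exact ⟨hx.1, hx.2⟩
      · exact ⟨hwim.1, hwim.2⟩
    · apply Complex.ext
      · rw [Fre]
        simp only [Complex.add_re, Complex.ofReal_re, Complex.add_im, Complex.ofReal_im,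
          Complex.real_smul, Complex.mul_re, Complex.mul_im, Complex.I_re, Complex.I_im]
        simpa using hgx
      · rw [Fim]; simp [Complex.real_smul]
  -- Lipschitz
  have hlip : LipschitzOnWith 8 F (Rect l₁ h) := by
    apply LipschitzOnWith.of_dist_le_mul
    intro z hz w hw
    obtain ⟨hzre, hzim⟩ := hz
    obtain ⟨hwre, hwim⟩ := hw
    have ht0 : 0 ≤ z.im / h := div_nonneg hzim.1 hh.le
    have ht1 : z.im / h ≤ 1 := (div_le_one hh).mpr hzim.2
    set uz : ℝ := (1 - z.im / h) * φb z.re + (z.im / h) * φt z.re with huz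
    set uw : ℝ := (1 - w.im / h) * φb w.re + (w.im / h) * φt w.re with huw
    have habs : dist (F z) (F w) ≤ |uz - uw| + |z.im - w.im| := by
      rw [Complex.dist_eq]
      have hre' : (F z - F w).re = uz - uw := by rw [Complex.sub_re, Fre, Fre]
      have him' : (F z - F w).im = z.im - w.im := by rw [Complex.sub_im, Fim, Fim]
      calc ‖F z - F w‖ ≤ |(F z - F w).re| + |(F z - F w).im| :=
            Complex.norm_le_abs_re_add_abs_im _
        _ = |uz - uw| + |z.im - w.im| := by rw [hre', him']
    have e1 : uz - uw = (1 - z.im / h) * (φb z.re - φb w.re)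
        + (z.im / h) * (φt z.re - φt w.re)
        + ((w.im - z.im) / h) * (φb w.re - φt w.re) := by
      rw [huz, huw]
      ring
    have habs1 := almostIsom_lip hφb hwre hzre
    have habs2 := almostIsom_lip hφt hwre hzre
    have hnear' : |φb w.re - φt w.re| ≤ 2 * A := by
      have h1 := almostIsom_near hφb hl₁0' hwre
      have h2 := almostIsom_near hφt hl₁0' hwre
      rw [abs_le] at h1 h2 ⊢
      constructor <;> [linarith [h1.1, h2.2]; linarith [h1.2, h2.1]]
    have hc1 : |1 - z.im / h| ≤ 1 := by rw [abs_le]; constructor <;> linarith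
    have hc2 : |z.im / h| ≤ 1 := by rw [abs_le]; constructor <;> linarith
    have t1 : |(1 - z.im / h) * (φb z.re - φb w.re)| ≤ (1 + ε) * |z.re - w.re| := by
      rw [abs_mul]
      calc |1 - z.im / h| * |φb z.re - φb w.re| ≤ 1 * |φb z.re - φb w.re| :=
            mul_le_mul_of_nonneg_right hc1 (abs_nonneg _)
        _ = |φb z.re - φb w.re| := one_mul _
        _ ≤ (1 + ε) * |z.re - w.re| := habs1
    have t2 : |(z.im / h) * (φt z.re - φt w.re)| ≤ (1 + ε) * |z.re - w.re| := by
      rw [abs_mul]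
      calc |z.im / h| * |φt z.re - φt w.re| ≤ 1 * |φt z.re - φt w.re| :=
            mul_le_mul_of_nonneg_right hc2 (abs_nonneg _)
        _ = |φt z.re - φt w.re| := one_mul _
        _ ≤ (1 + ε) * |z.re - w.re| := habs2
    have t3 : |((w.im - z.im) / h) * (φb w.re - φt w.re)| ≤ (|z.im - w.im| / h) * (2 * A) := by
      rw [abs_mul, abs_div, abs_of_pos hh, abs_sub_comm w.im]
      exact mul_le_mul_of_nonneg_left hnear' (by positivity)
    have t3' : (|z.im - w.im| / h) * (2 * A) ≤ 2 * |z.im - w.im| := by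
      have hb2 : 2 * A ≤ 2 * (ε * h) := by linarith
      calc (|z.im - w.im| / h) * (2 * A) ≤ (|z.im - w.im| / h) * (2 * (ε * h)) :=
            mul_le_mul_of_nonneg_left hb2 (by positivity)
        _ = 2 * ε * |z.im - w.im| := by
            rw [div_mul_eq_mul_div, div_eq_iff hhne]; ring
        _ ≤ 2 * |z.im - w.im| := by
            have k := mul_le_mul_of_nonneg_right hε1.le (abs_nonneg (z.im - w.im))
            linarith
    have hu : |uz - uw| ≤ 2 * (1 + ε) * |z.re - w.re| + 2 * |z.im - w.im| := by
      rw [e1]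
      calc |(1 - z.im / h) * (φb z.re - φb w.re) + (z.im / h) * (φt z.re - φt w.re)
            + ((w.im - z.im) / h) * (φb w.re - φt w.re)|
          ≤ |(1 - z.im / h) * (φb z.re - φb w.re) + (z.im / h) * (φt z.re - φt w.re)|
            + |((w.im - z.im) / h) * (φb w.re - φt w.re)| := abs_add_le _ _
        _ ≤ (|(1 - z.im / h) * (φb z.re - φb w.re)| + |(z.im / h) * (φt z.re - φt w.re)|)
            + |((w.im - z.im) / h) * (φb w.re - φt w.re)| := by
              linarith [abs_add_le ((1 - z.im / h) * (φb z.re - φb w.re))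
                ((z.im / h) * (φt z.re - φt w.re))]
        _ ≤ 2 * (1 + ε) * |z.re - w.re| + 2 * |z.im - w.im| := by
              linarith [t1, t2, t3, t3']
    have hdre : |z.re - w.re| ≤ dist z w := by
      rw [Complex.dist_eq]
      simpa [Complex.sub_re] using Complex.abs_re_le_norm (z - w)
    have hdim : |z.im - w.im| ≤ dist z w := by
      rw [Complex.dist_eq]
      simpa [Complex.sub_im] using Complex.abs_im_le_norm (z - w)
    have : (8 : NNReal) * dist z w = 8 * dist z w := by norm_num
    rw [this]
    have hd0 : 0 ≤ dist z w := dist_nonneg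
    have k1 := mul_le_mul_of_nonneg_left hdre (by linarith : (0:ℝ) ≤ 2 * (1 + ε))
    have k2 := mul_le_mul_of_nonneg_right hε1.le hd0
    linarith [habs, hu, hdim]
  -- boundary conditions
  have hbdry1 : ∀ x ∈ Set.Icc (0:ℝ) l₁,
      F (x : ℂ) = ((φb x : ℝ) : ℂ) ∧
      F ((x : ℂ) + (h : ℂ) * Complex.I) = ((φt x : ℝ) : ℂ) + (h : ℂ) * Complex.I := by
    intro x hx
    constructor
    · apply Complex.ext
      · rw [Fre]; simp
      · rw [Fim]; simp
    · apply Complex.ext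
      · rw [Fre]
        simp only [Complex.add_re, Complex.ofReal_re, Complex.add_im, Complex.ofReal_im,
          Complex.mul_re, Complex.mul_im, Complex.I_re, Complex.I_im]
        field_simp
        simp
      · rw [Fim]; simp
  have hbdry2 : ∀ y ∈ Set.Icc (0:ℝ) h,
      F ((y : ℂ) * Complex.I) = (y : ℂ) * Complex.I ∧
      F ((l₁ : ℂ) + (y : ℂ) * Complex.I) = (l₂ : ℂ) + (y : ℂ) * Complex.I := by
    intro y hy
    constructor
    · apply Complex.ext
      · rw [Fre]
        simp [hb0, ht0f]
      · rw [Fim]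
    · apply Complex.ext
      · rw [Fre]
        simp only [Complex.add_re, Complex.ofReal_re, Complex.add_im, Complex.ofReal_im,
          Complex.mul_re, Complex.mul_im, Complex.I_re, Complex.I_im]
        rw [show l₁ + (y * 0 - 0 * 1) = l₁ by ring, hbl, htl]
        field_simp
        ring
      · rw [Fim]; simp
  refine ⟨F, ⟨hmaps, hinj, hsurj⟩, hlip.continuousOn, hbdry1, hbdry2, hinj,
    hlip.continuousOn, fun z hz => ⟨8, 1, one_pos,
      hlip.mono (fun w hw => interior_subset hw.2)⟩, ?_⟩
  -- a.e. derivative bound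
  apply MeasureTheory.ae_restrict_of_forall_mem isOpen_interior.measurableSet
  intro z hz
  rw [interior_Rect] at hz
  obtain ⟨hzx, hzy⟩ := hz
  set x : ℝ := z.re with hxdef
  set y : ℝ := z.im with hydef
  set db : ℝ := derivWithin φb (Set.Icc 0 l₁) x with hdbdef
  set dt : ℝ := derivWithin φt (Set.Icc 0 l₁) x with hdtdef
  have hxmem : x ∈ Set.Icc 0 l₁ := Set.mem_Icc_of_Ioo hzx
  have hdb : HasDerivAt φb db x := almostIsom_hasDerivAt hφb hzx
  have hdt : HasDerivAt φt dt x := almostIsom_hasDerivAt hφt hzx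
  have hdbε : |db - 1| ≤ ε := hbder x hxmem
  have hdtε : |dt - 1| ≤ ε := htder x hxmem
  have ht0 : 0 ≤ y / h := div_nonneg hzy.1.le hh.le
  have ht1 : y / h ≤ 1 := (div_le_one hh).mpr hzy.2.le
  -- fderiv building blocks
  have him : HasFDerivAt (fun w : ℂ => w.im) Complex.imCLM z :=
    Complex.imCLM.hasFDerivAt
  have hdivh : HasFDerivAt (fun w : ℂ => w.im / h) (h⁻¹ • Complex.imCLM) z := by
    simpa [div_eq_inv_mul] using him.const_mul h⁻¹
  have hc1d : HasFDerivAt (fun w : ℂ => 1 - w.im / h) (-(h⁻¹ • Complex.imCLM)) z :=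
    hdivh.const_sub 1
  have hxb : HasFDerivAt (fun w : ℂ => φb w.re) (db • Complex.reCLM) z :=
    hdb.comp_hasFDerivAt z Complex.reCLM.hasFDerivAt
  have hxt : HasFDerivAt (fun w : ℂ => φt w.re) (dt • Complex.reCLM) z :=
    hdt.comp_hasFDerivAt z Complex.reCLM.hasFDerivAt
  have hp1 := hc1d.mul hxb
  have hp2 := hdivh.mul hxt
  have hu := hp1.add hp2
  have h1 := Complex.ofRealCLM.hasFDerivAt.comp z hu
  have h2 : HasFDerivAt (fun w : ℂ => w.im • Complex.I)
      (Complex.imCLM.smulRight Complex.I) z :=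
    (Complex.imCLM.smulRight Complex.I).hasFDerivAt
  have hFd : HasFDerivAt F (Complex.ofRealCLM.comp
      ((1 - y / h) • (db • Complex.reCLM) + φb x • -(h⁻¹ • Complex.imCLM)
        + ((y / h) • (dt • Complex.reCLM) + φt x • (h⁻¹ • Complex.imCLM)))
      + Complex.imCLM.smulRight Complex.I) z := h1.add h2
  set a : ℝ := (1 - y / h) * db + (y / h) * dt with hadef
  set b : ℝ := (φt x - φb x) / h with hbdef
  set Amap : ℂ →L[ℝ] ℂ := Complex.ofRealCLM.comp
      ((1 - y / h) • (db • Complex.reCLM) + φb x • -(h⁻¹ • Complex.imCLM)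
        + ((y / h) • (dt • Complex.reCLM) + φt x • (h⁻¹ • Complex.imCLM)))
      + Complex.imCLM.smulRight Complex.I with hAdef
  have hAre : ∀ w : ℂ, (Amap w).re = a * w.re + b * w.im := by
    intro w
    simp only [hAdef, ContinuousLinearMap.add_apply, ContinuousLinearMap.comp_apply,
      ContinuousLinearMap.smul_apply, ContinuousLinearMap.neg_apply,
      ContinuousLinearMap.smulRight_apply, Complex.reCLM_apply, Complex.imCLM_apply,
      Complex.ofRealCLM_apply, smul_eq_mul, Complex.add_re, Complex.ofReal_re,
      Complex.real_smul, Complex.mul_re, Complex.I_re, Complex.I_im, Complex.ofReal_im]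
    rw [hadef, hbdef]
    field_simp
    ring
  have hAim : ∀ w : ℂ, (Amap w).im = w.im := by
    intro w
    simp only [hAdef, ContinuousLinearMap.add_apply, ContinuousLinearMap.comp_apply,
      ContinuousLinearMap.smul_apply, ContinuousLinearMap.neg_apply,
      ContinuousLinearMap.smulRight_apply, Complex.reCLM_apply, Complex.imCLM_apply,
      Complex.ofRealCLM_apply, smul_eq_mul, Complex.add_im, Complex.ofReal_im,
      Complex.real_smul, Complex.mul_im, Complex.I_re, Complex.I_im, Complex.ofReal_re]
    ring
  have haε : |a - 1| ≤ ε := by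
    have e : a - 1 = (1 - y / h) * (db - 1) + (y / h) * (dt - 1) := by
      rw [hadef]; ring
    rw [abs_le] at hdbε hdtε ⊢
    have hth : (0:ℝ) ≤ 1 - y / h := by linarith
    constructor
    · rw [e]
      have k1 := mul_le_mul_of_nonneg_left hdbε.1 hth
      have k2 := mul_le_mul_of_nonneg_left hdtε.1 ht0
      linarith
    · rw [e]
      have k1 := mul_le_mul_of_nonneg_left hdbε.2 hth
      have k2 := mul_le_mul_of_nonneg_left hdtε.2 ht0
      linarith
  have hbb : |b| ≤ 2 * ε := by
    have h1 := almostIsom_near hφb hl₁0' hxmem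
    have h2 := almostIsom_near hφt hl₁0' hxmem
    have h3 : |φt x - φb x| ≤ 2 * A := by
      rw [abs_le] at h1 h2 ⊢
      constructor <;> [linarith [h2.1, h1.2]; linarith [h2.2, h1.1]]
    rw [hbdef, abs_div, abs_of_pos hh, div_le_iff₀ hh]
    calc |φt x - φb x| ≤ 2 * A := h3
      _ ≤ 2 * ε * h := by linarith
  have ha1 : 1 - ε ≤ a := by
    rw [abs_le] at haε; linarith [haε.1]
  have ha2 : a ≤ 1 + ε := by
    rw [abs_le] at haε; linarith [haε.2]
  have hbl' : -(2*ε) ≤ b ∧ b ≤ 2*ε := abs_le.mp hbb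
  have hnorm : ‖Amap‖ ≤ 1 + 4 * ε := by
    apply ContinuousLinearMap.opNorm_le_bound _ (by linarith)
    intro w
    have hsq : ‖Amap w‖ ^ 2 ≤ ((1 + 4 * ε) * ‖w‖) ^ 2 := by
      rw [Complex.sq_norm, Complex.normSq_apply, hAre w, hAim w,
        mul_pow, Complex.sq_norm, Complex.normSq_apply]
      have hb2 : b ^ 2 ≤ (2 * ε) ^ 2 := sq_le_sq' hbl'.1 hbl'.2
      have ha2' : a ^ 2 ≤ (1 + ε) ^ 2 := sq_le_sq' (by linarith) ha2
      have hq2 : (b * w.im) ^ 2 ≤ 4 * ε ^ 2 * w.im ^ 2 := by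
        have k := mul_le_mul_of_nonneg_right hb2 (sq_nonneg w.im)
        calc (b * w.im) ^ 2 = b ^ 2 * w.im ^ 2 := by ring
          _ ≤ (2 * ε) ^ 2 * w.im ^ 2 := k
          _ = 4 * ε ^ 2 * w.im ^ 2 := by ring
      have key1 : 2 * (a * w.re) * (b * w.im) ≤ ε * (a * w.re) ^ 2 + 4 * ε * w.im ^ 2 := by
        have h4 : 2 * (a * w.re) * (b * w.im) * ε
            ≤ ε ^ 2 * (a * w.re) ^ 2 + (b * w.im) ^ 2 := by
          nlinarith [sq_nonneg (ε * (a * w.re) - b * w.im)]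
        have h6 : ε * (2 * (a * w.re) * (b * w.im))
            ≤ ε * (ε * (a * w.re) ^ 2 + 4 * ε * w.im ^ 2) := by
          have : ε * (2 * (a * w.re) * (b * w.im)) = 2 * (a * w.re) * (b * w.im) * ε := by ring
          rw [this]
          calc 2 * (a * w.re) * (b * w.im) * ε
              ≤ ε ^ 2 * (a * w.re) ^ 2 + (b * w.im) ^ 2 := h4
            _ ≤ ε ^ 2 * (a * w.re) ^ 2 + 4 * ε ^ 2 * w.im ^ 2 := by linarith
            _ = ε * (ε * (a * w.re) ^ 2 + 4 * ε * w.im ^ 2) := by ring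
        exact le_of_mul_le_mul_left h6 hε0
      have hp2 : (a * w.re) ^ 2 ≤ (1 + ε) ^ 2 * w.re ^ 2 := by
        have k := mul_le_mul_of_nonneg_right ha2' (sq_nonneg w.re)
        calc (a * w.re) ^ 2 = a ^ 2 * w.re ^ 2 := by ring
          _ ≤ (1 + ε) ^ 2 * w.re ^ 2 := k
      have hpscale : (1 + ε) * (a * w.re) ^ 2 ≤ (1 + ε) * ((1 + ε) ^ 2 * w.re ^ 2) :=
        mul_le_mul_of_nonneg_left hp2 (by linarith)
      have hcx : (1 + ε) ^ 3 * w.re ^ 2 ≤ (1 + 4 * ε) ^ 2 * w.re ^ 2 :=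
        mul_le_mul_of_nonneg_right (by nlinarith [hε0.le, hεhalf]) (sq_nonneg w.re)
      have hcy : (1 + 4 * ε + 4 * ε ^ 2) * w.im ^ 2 ≤ (1 + 4 * ε) ^ 2 * w.im ^ 2 :=
        mul_le_mul_of_nonneg_right (by nlinarith [hε0.le]) (sq_nonneg w.im)
      linarith [key1, hq2, hpscale, hcx, hcy]
    exact le_of_pow_le_pow_left₀ (by norm_num) (by positivity) hsq
  have hdet : LinearMap.det ((Amap : ℂ →L[ℝ] ℂ) : ℂ →ₗ[ℝ] ℂ) = a := by
    have e00 : (Amap 1).re = a := by rw [hAre]; simp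
    have e10 : (Amap 1).im = 0 := by rw [hAim]; simp
    have e01 : (Amap Complex.I).re = b := by rw [hAre]; simp
    have e11 : (Amap Complex.I).im = 1 := by rw [hAim]; simp
    rw [← LinearMap.det_toMatrix Complex.basisOneI, Matrix.det_fin_two]
    simp only [LinearMap.toMatrix_apply, Complex.coe_basisOneI_repr,
      Complex.coe_basisOneI, ContinuousLinearMap.coe_coe,
      Matrix.cons_val_zero, Matrix.cons_val_one, Matrix.head_cons]
    rw [e00, e10, e01, e11]
    ring
  refine ⟨Amap, hFd, ?_⟩
  rw [hdet]
  have h8 : ‖Amap‖ ^ 2 ≤ (1 + 4 * ε) ^ 2 := by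
    have := pow_le_pow_left₀ (norm_nonneg Amap) hnorm 2
    exact this
  calc ‖Amap‖ ^ 2 ≤ (1 + 4 * ε) ^ 2 := h8
    _ ≤ (1 + 34 * ε) * a := by
        have k1 := mul_le_mul_of_nonneg_left ha1 (by linarith : (0:ℝ) ≤ 1 + 34 * ε)
        have k2 := mul_nonneg hε0.le (by linarith : (0:ℝ) ≤ 1 - 2 * ε)
        nlinarith [k1, k2]
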